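/- arXiv:1612.07084 — 2 statements merged into one kernel-verified Lean document; each statement's English description precedes it below -/
import Mathlib

section
/- Let K be a field, let k, r, β, f be positive integers with n = k + r, let m ∈ Fin f be the requested file index, and let P be an r×k matrix over K. Suppose E is a k×k matrix with entries in {0,1} such that: (1) every row of E has exactly β ones; (2) every column of E has exactly β ones; (3) for every row index t, the set J_t = {l : E_{t,l} = 1} contains the support of no nonzero vector v ∈ K^k with P·v = 0. For each l ∈ Fin k, let σ_l be an injective map from {t : E_{t,l} = 1} to Fin β. Fix an arbitrary matrix U over K with rows indexed by Fin k and columns indexed by pairs (m′, a) ∈ Fin f × Fin β. Given files X : Fin f → Matrix (Fin β) (Fin k) K, define for each systematic node l ∈ Fin k the stored column y_l ∈ K^{Fin f × Fin β} by y_l(m′, a) = X_{m′}(a, l), and for each parity node p ∈ Fin r the stored column y_{k+p}(m′, a) = −∑_{l ∈ Fin k} P_{p,l} · X_{m′}(a, l). Define the query matrices Q^{(l)} = U + V^{(l)} for l ∈ Fin k, where V^{(l)}_{t,(m′,a)} equals 1 if m′ = m, E_{t,l} = 1 and σ_l(t) = a, and equals 0 otherwise, and Q^{(k+p)} = U for p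 ∈ Fin r. Define the response of node j as the vector r_j = Q^{(j)} · y_j ∈ K^k. Then the responses determine the requested file: for any two collections of files X and X′ that produce identical response vectors r_1, …, r_n (with the same U, E, σ, and m), one has X_m = X′_m. -/
open Matrix

/-- Recovery property of the PIR protocol: if the storage code is systematic with
parity part `P`, the query-structure matrix `E` is `β`-regular with rows that are
ML-correctable erasure patterns for the code `{v : P ⬝ v = 0}`, and the maps `σ l`
are injective on `{t : E t l}`, then the `n = k + r` response vectors determine the
requested file `X m`. -/
theorem stmt_1 {K : Type} [Field K] {k r β f : ℕ}
    (hk : 0 < k) (hr : 0 < r) (hβ : 0 < β) (hf : 0 < f)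
    (m : Fin f) (P : Matrix (Fin r) (Fin k) K)
    (E : Fin k → Fin k → Bool)
    (hrow : ∀ t : Fin k, (Finset.univ.filter fun l => E t l).card = β)
    (hcol : ∀ l : Fin k, (Finset.univ.filter fun t => E t l).card = β)
    (hml : ∀ t : Fin k, ∀ v : Fin k → K, P.mulVec v = 0 →
      (∀ l, v l ≠ 0 → E t l) → v = 0)
    (σ : Fin k → Fin k → Fin β)
    (hσ : ∀ l t t', E t l → E t' l → σ l t = σ l t' → t = t')
    (U : Matrix (Fin k) (Fin f × Fin β) K)
    (X X' : Fin f → Matrix (Fin β) (Fin k) K)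
    -- equal responses from the `k` systematic nodes (queries `U + V⁽ˡ⁾`)
    (hsys : ∀ l : Fin k,
      (U + (Matrix.of fun (t : Fin k) (p : Fin f × Fin β) => if p.1 = m ∧ E t l ∧ σ l t = p.2 then (1 : K) else 0)).mulVec
          (fun p => X p.1 p.2 l) =
        (U + (Matrix.of fun (t : Fin k) (p : Fin f × Fin β) => if p.1 = m ∧ E t l ∧ σ l t = p.2 then (1 : K) else 0)).mulVec
          (fun p => X' p.1 p.2 l))
    -- equal responses from the `r` parity nodes (queries `U`)
    (hpar : ∀ p : Fin r,
      U.mulVec (fun q => -∑ l, P p l * X q.1 q.2 l) =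
        U.mulVec (fun q => -∑ l, P p l * X' q.1 q.2 l)) :
    X m = X' m := by
  classical
  -- difference vectors
  set d : Fin k → (Fin f × Fin β) → K := fun l p => X p.1 p.2 l - X' p.1 p.2 l with hd
  -- Step 1: from systematic responses
  have key : ∀ t l, U.mulVec (d l) t + (if E t l then d l (m, σ l t) else 0) = 0 := by
    intro t l
    have h0 : (U + (Matrix.of fun (t : Fin k) (p : Fin f × Fin β) =>
        if p.1 = m ∧ E t l ∧ σ l t = p.2 then (1 : K) else 0)).mulVec (d l) = 0 := by
      have h' : (U + (Matrix.of fun (t : Fin k) (p : Fin f × Fin β) =>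
          if p.1 = m ∧ E t l ∧ σ l t = p.2 then (1 : K) else 0)).mulVec
          ((fun p => X p.1 p.2 l) - fun p => X' p.1 p.2 l) = 0 := by
        rw [Matrix.mulVec_sub, hsys l, sub_self]
      exact h'
    have h1 := congrFun h0 t
    rw [Matrix.add_mulVec] at h1
    simp only [Pi.add_apply, Pi.zero_apply] at h1
    have hV : (Matrix.of fun (t : Fin k) (p : Fin f × Fin β) =>
        if p.1 = m ∧ E t l ∧ σ l t = p.2 then (1 : K) else 0).mulVec (d l) t
        = if E t l then d l (m, σ l t) else 0 := by
      simp only [Matrix.mulVec, dotProduct, Matrix.of_apply]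
      by_cases hE : E t l
      · simp only [hE, if_pos trivial]
        rw [Finset.sum_eq_single (m, σ l t)]
        · simp
        · intro p _ hp
          have hc : ¬(p.1 = m ∧ True ∧ σ l t = p.2) := by
            rintro ⟨h1, -, h3⟩
            exact hp (Prod.ext_iff.mpr ⟨h1, h3.symm⟩)
          rw [if_neg hc, zero_mul]
        · simp
      · simp [hE]
    rw [hV] at h1
    exact h1
  -- Step 2: from parity responses
  have keyP : ∀ p t, ∑ l, P p l * U.mulVec (d l) t = 0 := by
    intro p t
    have h0 : U.mulVec ((fun q => -∑ l, P p l * X q.1 q.2 l)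
        - fun q => -∑ l, P p l * X' q.1 q.2 l) = 0 := by
      rw [Matrix.mulVec_sub, hpar p, sub_self]
    have h1 := congrFun h0 t
    simp only [Matrix.mulVec, dotProduct, Pi.sub_apply, Pi.zero_apply] at h1 ⊢
    have hterm : ∀ q : Fin f × Fin β,
        (-∑ l, P p l * X q.1 q.2 l) - -∑ l, P p l * X' q.1 q.2 l
        = -∑ l, P p l * d l q := by
      intro q
      simp only [hd]
      rw [Finset.sum_congr rfl (fun l _ => mul_sub (P p l) _ _), Finset.sum_sub_distrib]
      ring
    rw [Finset.sum_congr rfl (fun q _ => by rw [hterm q])] at h1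
    have h2 : ∑ q, U t q * ∑ l, P p l * d l q = 0 := by
      have := h1
      simp only [mul_neg, Finset.sum_neg_distrib, neg_eq_zero] at this
      exact this
    calc ∑ l, P p l * ∑ q, U t q * d l q
        = ∑ l, ∑ q, P p l * (U t q * d l q) := by
          exact Finset.sum_congr rfl fun l _ => Finset.mul_sum _ _ _
      _ = ∑ q, ∑ l, P p l * (U t q * d l q) := Finset.sum_comm
      _ = ∑ q, U t q * ∑ l, P p l * d l q := by
          refine Finset.sum_congr rfl fun q _ => ?_
          rw [Finset.mul_sum]
          exact Finset.sum_congr rfl fun l _ => by ring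
      _ = 0 := h2
  -- Step 3: for each t, the erasure-decoding vector vanishes
  have hzero : ∀ t l, E t l → d l (m, σ l t) = 0 := by
    intro t l hE
    set v : Fin k → K := fun l => if E t l then d l (m, σ l t) else 0 with hv
    have hveq : ∀ l, v l = -U.mulVec (d l) t := by
      intro l
      have hk := key t l
      simp only [hv]
      linear_combination hk
    have hPv : P.mulVec v = 0 := by
      funext p
      simp only [Matrix.mulVec, dotProduct, Pi.zero_apply]
      calc ∑ l, P p l * v l = -∑ l, P p l * U.mulVec (d l) t := by
            rw [← Finset.sum_neg_distrib]
            refine Finset.sum_congr rfl fun l _ => ?_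
            rw [hveq l]; ring
        _ = 0 := by rw [keyP p t, neg_zero]
    have hsupp : ∀ l, v l ≠ 0 → E t l := by
      intro l h
      by_contra hE'
      exact h (by simp [hv, hE'])
    have hvl := congrFun (hml t v hPv hsupp) l
    simpa [hv, hE] using hvl
  -- Step 4: surjectivity of σ l on the column support
  have hsurj : ∀ l a, ∃ t, E t l ∧ σ l t = a := by
    intro l a
    set s := Finset.univ.filter (fun t => E t l) with hs
    have hinj : Set.InjOn (σ l) s := by
      intro t ht t' ht' h
      simp only [hs, Finset.mem_coe, Finset.mem_filter] at ht ht'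
      exact hσ l t t' ht.2 ht'.2 h
    have hcard : (s.image (σ l)).card = β := by
      rw [Finset.card_image_of_injOn hinj, hcol l]
    have : s.image (σ l) = Finset.univ :=
      Finset.eq_of_subset_of_card_le (Finset.subset_univ _)
        (by rw [hcard, Finset.card_univ, Fintype.card_fin])
    have ha : a ∈ s.image (σ l) := this ▸ Finset.mem_univ a
    obtain ⟨t, ht, hta⟩ := Finset.mem_image.mp ha
    simp only [hs, Finset.mem_filter] at ht
    exact ⟨t, ht.2, hta⟩
  -- conclude
  ext a l
  obtain ⟨t, hE, hta⟩ := hsurj l a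
  have := hzero t l hE
  rw [hta] at this
  simpa [hd, sub_eq_zero] using this
end

section
/- Let K be a field and let k > r ≥ 1 be integers. Let P be an r×k matrix over K; since k > r, the kernel C̃ = {v ∈ K^k : P·v = 0} is nonzero. Let d̃ be the minimum Hamming weight of a nonzero vector in C̃, and set β = d̃ − 1, assuming β ≥ 1. Then there exist a k×k matrix E with entries in {0,1} and injective maps σ_l : {t : E_{t,l} = 1} → Fin β for each l ∈ Fin k such that: (1) every row of E has exactly β ones; (2) every column of E has exactly β ones; (3) for every row t, the set {l : E_{t,l} = 1} contains the support of no nonzero v ∈ K^k with P·v = 0. Consequently, for every choice of the random matrix U, every number of files f, and every requested index m, the PIR protocol built from E and σ recovers the requested file from the responses: any two collections of files producing the same n response vectors agree on the m-th file. Since each of the n nodes returns k symbols while the retrieved file consists of βk = (d̃ − 1)k symbols, the communication price of privacy of this scheme equals n/(d̃ − 1). -/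
open Matrix

/-- For `β = d̃_min − 1` (where `d̃_min` is the minimum Hamming weight of a nonzero
vector of the code `C̃ = ker P`), there exist a `β`-regular 0/1 matrix `E` whose rows
are ML-correctable erasure patterns for `C̃` and injections `σ l`, such that the
resulting PIR protocol recovers the requested file from the responses for every `U`,
every number of files `f`, and every requested index `m`; its communication price of
privacy equals `n / (d̃_min − 1)` with `n = k + r`. -/
theorem stmt_2 {K : Type} [Field K] [DecidableEq K] {k r : ℕ}
    (hr : 1 ≤ r) (hrk : r < k)
    (P : Matrix (Fin r) (Fin k) K)
    (dtilde : ℕ)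
    (hd_le : ∀ v : Fin k → K, P.mulVec v = 0 → v ≠ 0 → dtilde ≤ hammingNorm v)
    (hd_ex : ∃ v : Fin k → K, P.mulVec v = 0 ∧ v ≠ 0 ∧ hammingNorm v = dtilde)
    (β : ℕ) (hβ : β = dtilde - 1) (hβ1 : 1 ≤ β) :
    ∃ (E : Fin k → Fin k → Bool) (σ : Fin k → Fin k → Fin β),
      -- (1) every row of `E` has exactly `β` ones
      (∀ t : Fin k, (Finset.univ.filter fun l => E t l).card = β) ∧
      -- (2) every column of `E` has exactly `β` ones
      (∀ l : Fin k, (Finset.univ.filter fun t => E t l).card = β) ∧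
      -- (3) the rows of `E` are ML-correctable erasure patterns for `ker P`
      (∀ t : Fin k, ∀ v : Fin k → K, P.mulVec v = 0 →
        (∀ l, v l ≠ 0 → E t l) → v = 0) ∧
      -- the maps `σ l` are injective on `{t : E t l}`
      (∀ l t t', E t l → E t' l → σ l t = σ l t' → t = t') ∧
      -- recovery: equal responses imply equal requested files
      (∀ (f : ℕ) (m : Fin f) (U : Matrix (Fin k) (Fin f × Fin β) K)
          (X X' : Fin f → Matrix (Fin β) (Fin k) K),
        (∀ l : Fin k,
          (U + (Matrix.of fun (t : Fin k) (p : Fin f × Fin β) =>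
              if p.1 = m ∧ E t l ∧ σ l t = p.2 then (1 : K) else 0)).mulVec
              (fun p => X p.1 p.2 l) =
            (U + (Matrix.of fun (t : Fin k) (p : Fin f × Fin β) =>
                if p.1 = m ∧ E t l ∧ σ l t = p.2 then (1 : K) else 0)).mulVec
              (fun p => X' p.1 p.2 l)) →
        (∀ p : Fin r,
          U.mulVec (fun q => -∑ l, P p l * X q.1 q.2 l) =
            U.mulVec (fun q => -∑ l, P p l * X' q.1 q.2 l)) →
        X m = X' m) ∧
      -- cPoP: `(n·k)/(β·k) = n/(d̃_min − 1)`
      (((k + r : ℚ) * k) / ((β : ℚ) * k) = (k + r : ℚ) / ((dtilde : ℚ) - 1)) := by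
  have hk0 : 0 < k := lt_of_le_of_lt (Nat.zero_le r) hrk
  haveI : NeZero k := ⟨hk0.ne'⟩
  have hdβ : dtilde = β + 1 := by omega
  have hβk : β < k := by
    obtain ⟨v, hv0, hvne, hvn⟩ := hd_ex
    have : hammingNorm v ≤ Fintype.card (Fin k) := hammingNorm_le_card_fintype
    simp [Fintype.card_fin] at this
    omega
  set E : Fin k → Fin k → Bool := fun t l => decide ((l - t : Fin k).val < β) with hE
  have hEiff : ∀ t l : Fin k, E t l = true ↔ (l - t : Fin k).val < β := by
    intro t l; simp [hE]
  set σ : Fin k → Fin k → Fin β := fun l t =>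
    ⟨min (l - t : Fin k).val (β - 1), by
      have := min_le_right (l - t : Fin k).val (β - 1); omega⟩ with hσ
  have hσval : ∀ l t : Fin k, E t l = true → (σ l t).val = (l - t : Fin k).val := by
    intro l t h
    rw [hEiff] at h
    simp only [hσ]
    omega
  -- base count
  have base : (Finset.univ.filter fun j : Fin k => j.val < β).card = β := by
    have hb : (Finset.univ.filter fun j : Fin k => j.val < β) = Finset.Iio (⟨β, hβk⟩ : Fin k) := by
      ext j
      simp [Fin.lt_def]
    rw [hb, Fin.card_Iio]
  -- transport along an equiv
  have transport : ∀ (e : Fin k ≃ Fin k),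
      (Finset.univ.filter fun x : Fin k => (e x).val < β).card = β := by
    intro e
    have h : (Finset.univ.filter fun x : Fin k => (e x).val < β).card
        = (Finset.univ.filter fun j : Fin k => j.val < β).card := by
      apply Finset.card_bij (fun x _ => e x)
      · intro a ha
        simp only [Finset.mem_filter, Finset.mem_univ, true_and] at ha ⊢
        exact ha
      · intro a₁ _ a₂ _ h
        exact e.injective h
      · intro b hb
        simp only [Finset.mem_filter, Finset.mem_univ, true_and] at hb
        exact ⟨e.symm b, by simpa using hb, by simp⟩
    rw [h, base]
  -- injectivity of σ on columns
  have hσinj : ∀ l t t' : Fin k, E t l → E t' l → σ l t = σ l t' → t = t' := by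
    intro l t t' h h' heq
    have h1 : (σ l t).val = (l - t : Fin k).val := hσval l t h
    have h2 : (σ l t').val = (l - t' : Fin k).val := hσval l t' h'
    have : (l - t : Fin k) = l - t' := by
      apply Fin.ext
      rw [← h1, ← h2, heq]
    exact sub_right_injective this
  -- erasure correction property
  have hcorr : ∀ t : Fin k, ∀ v : Fin k → K, P.mulVec v = 0 →
      (∀ l, v l ≠ 0 → E t l) → v = 0 := by
    intro t v hker hsupp
    by_contra hv
    have h1 : dtilde ≤ hammingNorm v := hd_le v hker hv
    have h2 : hammingNorm v ≤ β := by
      have hsub : (Finset.univ.filter fun l => v l ≠ 0) ⊆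
          (Finset.univ.filter fun l => E t l) := by
        intro l hl
        simp only [Finset.mem_filter, Finset.mem_univ, true_and] at hl ⊢
        exact hsupp l hl
      calc hammingNorm v = (Finset.univ.filter fun l => v l ≠ 0).card := rfl
        _ ≤ (Finset.univ.filter fun l => E t l).card := Finset.card_le_card hsub
        _ = β := by
          have := transport ((Equiv.subRight t : Fin k ≃ Fin k))
          rw [← this]; congr 1; ext x; simp only [Finset.mem_filter]; simp [hEiff, Equiv.subRight]
    omega
  have colcard : ∀ l : Fin k, (Finset.univ.filter fun t => E t l).card = β := by
    intro l
    have := transport ((Equiv.subLeft l : Fin k ≃ Fin k))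
    rw [← this]; congr 1; ext x; simp only [Finset.mem_filter]; simp [hEiff, Equiv.subLeft]
  refine ⟨E, σ, ?_, colcard, hcorr, hσinj, ?_, ?_⟩
  · intro t
    have := transport ((Equiv.subRight t : Fin k ≃ Fin k))
    rw [← this]; congr 1; ext x; simp only [Finset.mem_filter]; simp [hEiff, Equiv.subRight]
  · -- recovery
    intro f m U X X' h1 h2
    set D : Fin f × Fin β → Fin k → K := fun q l => X q.1 q.2 l - X' q.1 q.2 l with hD
    -- Step A: U.mulVec (D · l) t = -(if E t l then D (m, σ l t) l else 0)
    have stepA : ∀ l t, U.mulVec (fun q => D q l) t =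
        -(if E t l then D (m, σ l t) l else 0) := by
      intro l t
      set V : Matrix (Fin k) (Fin f × Fin β) K :=
        Matrix.of fun (t : Fin k) (p : Fin f × Fin β) =>
          if p.1 = m ∧ E t l ∧ σ l t = p.2 then (1 : K) else 0 with hV
      have hz : (U + V).mulVec (fun q => D q l) = 0 := by
        have : (fun q => D q l) =
            (fun p => X p.1 p.2 l) - (fun p => X' p.1 p.2 l) := by
          funext q; simp [hD, Pi.sub_apply]
        rw [this, Matrix.mulVec_sub, h1 l, sub_self]
      have hz' : U.mulVec (fun q => D q l) t + V.mulVec (fun q => D q l) t = 0 := by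
        have := congrFun hz t
        rwa [Matrix.add_mulVec, Pi.add_apply] at this
      have hVval : V.mulVec (fun q => D q l) t =
          if E t l then D (m, σ l t) l else 0 := by
        simp only [Matrix.mulVec, dotProduct, hV, Matrix.of_apply]
        by_cases hEtl : E t l
        · simp only [hEtl]
          rw [Finset.sum_eq_single (m, σ l t)]
          · simp
          · intro q _ hq
            have : ¬(q.1 = m ∧ True ∧ σ l t = q.2) := by
              intro ⟨ha, _, hb⟩
              exact hq (Prod.ext ha hb.symm)
            simp only [hEtl, true_and] at this ⊢
            rw [if_neg (by tauto), zero_mul]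
          · intro hmem; exact absurd (Finset.mem_univ _) hmem
        · simp only [hEtl]
          rw [Finset.sum_eq_zero]
          · simp
          · intro q _
            rw [if_neg (by tauto), zero_mul]
      rw [hVval] at hz'
      linear_combination hz'
    -- Step B: for every t, the vector l ↦ U.mulVec (D · l) t is in ker P
    have stepB : ∀ t : Fin k, P.mulVec (fun l => U.mulVec (fun q => D q l) t) = 0 := by
      intro t
      funext p
      have hzz : U.mulVec (fun q => ∑ l, P p l * D q l) = 0 := by
        have hsub : (fun q => ∑ l, P p l * D q l) =
            (fun q => -∑ l, P p l * X' q.1 q.2 l) - (fun q => -∑ l, P p l * X q.1 q.2 l) := by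
          funext q
          simp only [Pi.sub_apply, hD, neg_sub_neg, ← Finset.sum_sub_distrib]
          exact Finset.sum_congr rfl fun l _ => by ring
        rw [hsub, Matrix.mulVec_sub, h2 p, sub_self]
      have := congrFun hzz t
      simp only [Matrix.mulVec, dotProduct, Pi.zero_apply] at this ⊢
      rw [← this]
      simp only [Finset.mul_sum]
      rw [Finset.sum_comm]
      exact Finset.sum_congr rfl fun q _ => Finset.sum_congr rfl fun l _ => by ring
    -- Step C: entries of the m-th file agree where E hits
    have stepC : ∀ t l, E t l → X m (σ l t) l = X' m (σ l t) l := by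
      intro t l hEtl
      have hv := hcorr t (fun l => U.mulVec (fun q => D q l) t) (stepB t) ?_
      · have := congrFun hv l
        simp only [Pi.zero_apply] at this
        rw [stepA l t] at this
        simp only [hEtl, if_true] at this
        have hD0 : D (m, σ l t) l = 0 := neg_eq_zero.mp this
        simpa [hD, sub_eq_zero] using hD0
      · intro l' hl'
        by_contra hne
        simp only [stepA] at hl'
        simp only [Bool.not_eq_true] at hne
        simp [hne] at hl'
    -- σ l is surjective onto Fin β from the column of E
    have hsurj : ∀ (l : Fin k) (a : Fin β), ∃ t, E t l ∧ σ l t = a := by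
      intro l a
      have hinj : Set.InjOn (σ l) (Finset.univ.filter fun t => E t l) := by
        intro t ht t' ht' heq
        simp only [Finset.coe_filter, Set.mem_setOf_eq, Finset.mem_univ, true_and] at ht ht'
        exact hσinj l t t' ht ht' heq
      have himg : (((Finset.univ.filter fun t => E t l)).image (σ l)).card = β := by
        rw [Finset.card_image_of_injOn hinj, colcard l]
      have huniv : ((Finset.univ.filter fun t => E t l)).image (σ l) = Finset.univ := by
        apply Finset.eq_univ_of_card
        rw [himg, Fintype.card_fin]
      have ha : a ∈ ((Finset.univ.filter fun t => E t l)).image (σ l) := by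
        rw [huniv]; exact Finset.mem_univ a
      obtain ⟨t, ht, hta⟩ := Finset.mem_image.mp ha
      simp only [Finset.mem_filter] at ht
      exact ⟨t, ht.2, hta⟩
    ext a l
    obtain ⟨t, hEtl, hta⟩ := hsurj l a
    have := stepC t l hEtl
    rwa [hta] at this
  · -- cPoP arithmetic
    have hkQ : (k : ℚ) ≠ 0 := Nat.cast_ne_zero.mpr hk0.ne'
    rw [mul_div_mul_right _ _ hkQ]
    congr 1
    rw [hdβ]
    push_cast
    ring
end
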